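/- Let g : ℝ → ℝ be a continuous L-periodic function with L > 0 and α > 0. Then for every step function φ on (0,1), ∫_0^1 g(x/ε^α) φ(x) dx → (1/L)(∫_0^L g(s) ds) ∫_0^1 φ(x) dx as ε → 0⁺. -/

import Mathlib

open Set Filter MeasureTheory intervalIntegral

/-- Quantitative bound for the primitive of a periodic function. -/
lemma aux_bound (g : ℝ → ℝ) (L : ℝ) (hg : Continuous g) (hL : 0 < L)
    (hper : Function.Periodic g L) :
    ∃ C : ℝ, ∀ t : ℝ,
      |(∫ x in (0:ℝ)..t, g x) - t / L * (∫ s in (0:ℝ)..L, g s)| ≤ C := by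
  have h_int : ∀ t₁ t₂ : ℝ, IntervalIntegrable g MeasureSpace.volume t₁ t₂ :=
    fun t₁ t₂ => hg.intervalIntegrable t₁ t₂
  set I := ∫ s in (0:ℝ)..L, g s with hI
  set s₁ := sInf ((fun t => ∫ x in (0:ℝ)..t, g x) '' Icc 0 L) with hs₁
  set s₂ := sSup ((fun t => ∫ x in (0:ℝ)..t, g x) '' Icc 0 L) with hs₂
  refine ⟨max |s₁| |s₂| + |I|, fun t => ?_⟩
  have hlow := hper.sInf_add_zsmul_le_integral_of_pos (h_int 0 L) hL t
  have hup := hper.integral_le_sSup_add_zsmul_of_pos (h_int 0 L) hL t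
  have h1 : |(∫ x in (0:ℝ)..t, g x) - (⌊t / L⌋ : ℝ) * I| ≤ max |s₁| |s₂| := by
    rw [abs_le]
    constructor
    · have := neg_abs_le s₁
      have h' := le_max_left |s₁| |s₂|
      simp only [zsmul_eq_mul] at hlow
      linarith
    · have := le_abs_self s₂
      have h' := le_max_right |s₁| |s₂|
      simp only [zsmul_eq_mul] at hup
      linarith
  have h2 : |(⌊t / L⌋ : ℝ) * I - t / L * I| ≤ |I| := by
    rw [← sub_mul, abs_mul]
    have hf : |(⌊t / L⌋ : ℝ) - t / L| ≤ 1 := by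
      rw [abs_le]
      have h1 := Int.floor_le (t / L)
      have h2 := Int.lt_floor_add_one (t / L)
      constructor <;> linarith
    calc |(⌊t / L⌋ : ℝ) - t / L| * |I| ≤ 1 * |I| :=
          mul_le_mul_of_nonneg_right hf (abs_nonneg _)
      _ = |I| := one_mul _
  calc |(∫ x in (0:ℝ)..t, g x) - t / L * I|
      ≤ |(∫ x in (0:ℝ)..t, g x) - (⌊t / L⌋ : ℝ) * I| + |(⌊t / L⌋ : ℝ) * I - t / L * I| := by
        have := abs_sub_abs_le_abs_sub ((∫ x in (0:ℝ)..t, g x) - t / L * I) 0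
        exact abs_sub_le _ _ _
    _ ≤ max |s₁| |s₂| + |I| := add_le_add h1 h2

/-- Key convergence lemma. -/
lemma aux_key (g : ℝ → ℝ) (L : ℝ) (hg : Continuous g) (hL : 0 < L)
    (hper : Function.Periodic g L) (u : ℝ) :
    Tendsto (fun δ : ℝ => ∫ x in (0:ℝ)..u, g (x / δ)) (nhdsWithin 0 (Ioi 0))
      (nhds (u / L * ∫ s in (0:ℝ)..L, g s)) := by
  obtain ⟨C, hC⟩ := aux_bound g L hg hL hper
  set I := ∫ s in (0:ℝ)..L, g s with hI
  rw [← tendsto_sub_nhds_zero_iff]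
  refine squeeze_zero_norm' (a := fun δ : ℝ => C * δ) ?_ ?_
  · filter_upwards [self_mem_nhdsWithin] with δ (hδ : δ ∈ Ioi (0:ℝ))
    have hδ0 : (0:ℝ) < δ := hδ
    have hsub : (∫ x in (0:ℝ)..u, g (x / δ)) = δ * ∫ x in (0:ℝ)..u / δ, g x := by
      rw [intervalIntegral.integral_comp_div (f := g) hδ0.ne', smul_eq_mul]
      norm_num
    rw [hsub]
    have key : δ * (∫ x in (0:ℝ)..u / δ, g x) - u / L * I
        = δ * ((∫ x in (0:ℝ)..u / δ, g x) - (u / δ) / L * I) := by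
      field_simp
    rw [key]
    rw [Real.norm_eq_abs, abs_mul, abs_of_pos hδ0]
    rw [mul_comm C δ]
    exact mul_le_mul_of_nonneg_left (hC (u / δ)) hδ0.le
  · have : Tendsto (fun δ : ℝ => C * δ) (nhdsWithin 0 (Ioi 0)) (nhds (C * 0)) :=
      (tendsto_const_nhds.mul tendsto_id).mono_left nhdsWithin_le_nhds
    simpa using this

/-- Integral against an indicator piece. -/
lemma aux_piece (h : ℝ → ℝ) (hh : Continuous h) (a b c : ℝ)
    (ha : 0 ≤ a) (hab : a ≤ b) (hb : b ≤ 1) :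
    ∫ x in (0:ℝ)..1, h x * (c * Set.indicator (Set.Ioo a b) (fun _ => (1:ℝ)) x)
      = c * ∫ x in a..b, h x := by
  have heq : (fun x => h x * (c * Set.indicator (Set.Ioo a b) (fun _ => (1:ℝ)) x))
      = Set.indicator (Set.Ioo a b) (fun x => c * h x) := by
    funext x
    by_cases hx : x ∈ Set.Ioo a b <;> simp [hx, mul_comm]
  rw [heq, intervalIntegral.integral_of_le (zero_le_one),
    MeasureTheory.setIntegral_indicator measurableSet_Ioo]
  have hsub : Set.Ioc (0:ℝ) 1 ∩ Set.Ioo a b = Set.Ioo a b := by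
    apply Set.inter_eq_right.2
    intro x hx
    exact ⟨lt_of_le_of_lt ha hx.1, le_trans hx.2.le hb⟩
  rw [hsub, ← MeasureTheory.integral_Ioc_eq_integral_Ioo,
    ← intervalIntegral.integral_of_le hab, intervalIntegral.integral_const_mul]

lemma aux_piece_int (h : ℝ → ℝ) (hh : Continuous h) (a b c : ℝ) :
    IntervalIntegrable
      (fun x => h x * (c * Set.indicator (Set.Ioo a b) (fun _ => (1:ℝ)) x))
      MeasureSpace.volume 0 1 := by
  have heq : (fun x => h x * (c * Set.indicator (Set.Ioo a b) (fun _ => (1:ℝ)) x))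
      = Set.indicator (Set.Ioo a b) (fun x => c * h x) := by
    funext x
    by_cases hx : x ∈ Set.Ioo a b <;> simp [hx, mul_comm]
  rw [heq, intervalIntegrable_iff, Set.uIoc_of_le zero_le_one]
  exact ((continuous_const.mul hh).integrableOn_Ioc (a := 0) (b := 1)).indicator
    measurableSet_Ioo

/-- for a continuous `L`-periodic `g` and any step function `φ` on `(0,1)`
(a finite linear combination of characteristic functions of subintervals),
`∫_0^1 g(x/ε^α) φ(x) dx → (1/L)(∫_0^L g)·∫_0^1 φ` as `ε → 0⁺`. -/
theorem stmt3 (g : ℝ → ℝ) (L α : ℝ)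
    (hg : Continuous g) (hL : 0 < L) (hper : ∀ y : ℝ, g (y + L) = g y) (hα : 0 < α)
    (φ : ℝ → ℝ) (n : ℕ) (a b : Fin n → ℝ) (c : Fin n → ℝ)
    (hab : ∀ i, 0 ≤ a i ∧ a i ≤ b i ∧ b i ≤ 1)
    (hφ : φ = fun x => ∑ i, c i * Set.indicator (Set.Ioo (a i) (b i)) (fun _ => (1:ℝ)) x) :
    Tendsto (fun ε : ℝ => ∫ x in (0:ℝ)..1, g (x / ε ^ α) * φ x)
      (nhdsWithin 0 (Ioi 0))
      (nhds ((1 / L) * (∫ s in (0:ℝ)..L, g s) * ∫ x in (0:ℝ)..1, φ x)) := by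
  have hperiodic : Function.Periodic g L := hper
  set I := ∫ s in (0:ℝ)..L, g s with hI
  -- rewrite ∫ φ
  have hφint : (∫ x in (0:ℝ)..1, φ x) = ∑ i, c i * (b i - a i) := by
    rw [hφ]
    rw [intervalIntegral.integral_finset_sum (fun i _ =>
      by simpa using aux_piece_int (fun _ => (1:ℝ)) continuous_const (a i) (b i) (c i))]
    refine Finset.sum_congr rfl fun i _ => ?_
    have := aux_piece (fun _ => (1:ℝ)) continuous_const (a i) (b i) (c i)
      (hab i).1 (hab i).2.1 (hab i).2.2
    simpa using this
  -- rewrite the main integrand as a sum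
  have hmain : ∀ δ : ℝ, (∫ x in (0:ℝ)..1, g (x / δ) * (∑ i, c i *
      Set.indicator (Set.Ioo (a i) (b i)) (fun _ => (1:ℝ)) x))
      = ∑ i, c i * ∫ x in (a i)..(b i), g (x / δ) := by
    intro δ
    have hc : Continuous fun x : ℝ => g (x / δ) := hg.comp (continuous_id.div_const δ)
    have : (fun x => g (x / δ) * (∑ i, c i *
        Set.indicator (Set.Ioo (a i) (b i)) (fun _ => (1:ℝ)) x))
        = fun x => ∑ i, g (x / δ) * (c i *
        Set.indicator (Set.Ioo (a i) (b i)) (fun _ => (1:ℝ)) x) := by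
      funext x; rw [Finset.mul_sum]
    rw [this, intervalIntegral.integral_finset_sum (fun i _ =>
      aux_piece_int _ hc (a i) (b i) (c i))]
    exact Finset.sum_congr rfl fun i _ =>
      aux_piece _ hc (a i) (b i) (c i) (hab i).1 (hab i).2.1 (hab i).2.2
  -- convergence of δ ↦ ∑ c i * ∫_{a i}^{b i} g(x/δ)
  have hconv : Tendsto (fun δ : ℝ => ∑ i, c i * ∫ x in (a i)..(b i), g (x / δ))
      (nhdsWithin 0 (Ioi 0))
      (nhds (∑ i, c i * ((b i - a i) / L * I))) := by
    apply tendsto_finset_sum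
    intro i _
    apply Tendsto.const_mul
    have hb := aux_key g L hg hL hperiodic (b i)
    have ha := aux_key g L hg hL hperiodic (a i)
    have hsplit : ∀ δ : ℝ, (∫ x in (a i)..(b i), g (x / δ))
        = (∫ x in (0:ℝ)..(b i), g (x / δ)) - ∫ x in (0:ℝ)..(a i), g (x / δ) := by
      intro δ
      by_cases hδ : δ = 0
      · simp [hδ, mul_comm, sub_mul]
      · have hint : ∀ t₁ t₂ : ℝ, IntervalIntegrable (fun x => g (x / δ))
            MeasureSpace.volume t₁ t₂ :=
          fun t₁ t₂ => (hg.comp (continuous_id.div_const δ)).intervalIntegrable t₁ t₂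
        rw [← intervalIntegral.integral_interval_sub_left (hint 0 (b i)) (hint 0 (a i))]
    simp only [hsplit]
    have := hb.sub ha
    convert this using 2
    field_simp
    ring
  -- compose with ε ↦ ε ^ α
  have hcomp : Tendsto (fun ε : ℝ => ε ^ α) (nhdsWithin 0 (Ioi 0))
      (nhdsWithin 0 (Ioi 0)) := by
    rw [tendsto_nhdsWithin_iff]
    constructor
    · have : Tendsto (fun ε : ℝ => ε ^ α) (nhds 0) (nhds ((0:ℝ) ^ α)) := by
        apply ContinuousAt.tendsto
        exact Real.continuousAt_rpow_const 0 α (Or.inr hα.le)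
      rw [Real.zero_rpow hα.ne'] at this
      exact this.mono_left nhdsWithin_le_nhds
    · filter_upwards [self_mem_nhdsWithin] with ε (hε : ε ∈ Ioi (0:ℝ))
      exact Real.rpow_pos_of_pos hε α
  have final := hconv.comp hcomp
  have heqfun : (fun ε : ℝ => ∫ x in (0:ℝ)..1, g (x / ε ^ α) * φ x)
      = fun ε : ℝ => ∑ i, c i * ∫ x in (a i)..(b i), g (x / ε ^ α) := by
    funext ε
    rw [hφ]
    exact hmain (ε ^ α)
  rw [heqfun]
  have hval : (1 / L) * I * (∫ x in (0:ℝ)..1, φ x)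
      = ∑ i, c i * ((b i - a i) / L * I) := by
    rw [hφint, Finset.mul_sum]
    refine Finset.sum_congr rfl fun i _ => ?_
    field_simp
  rw [hval]
  exact final
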